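/- For every β > 1 and every n ≥ 0, P_{φ^n(1)}(β) < 1, where φ is the morphism φ(1)=2, φ(2)=211 and P_w(X) = (-X)^k + Σ_{i=1}^k a_i(-X)^{k-i} for w = a_1⋯a_k over {1,2}. -/
import Mathlib

/-- The morphism φ on the alphabet {1,2}: φ(1) = 2, φ(2) = 211. -/
def phi : ℕ → List ℕ
  | 1 => [2]
  | 2 => [2, 1, 1]
  | _ => []

/-- Extension of φ to words by concatenation. -/
def phiW (w : List ℕ) : List ℕ := w.flatMap phi

/-- The polynomial P_{a₁⋯a_k}(X) = (-X)^k + Σ_{i=1}^k a_i (-X)^{k-i}, evaluated at x. -/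
def P (w : List ℕ) (x : ℝ) : ℝ :=
  (-x) ^ w.length + ∑ i ∈ Finset.range w.length, (w.getD i 0 : ℝ) * (-x) ^ (w.length - 1 - i)

lemma P_nil (x : ℝ) : P [] x = 1 := by simp [P]

lemma P_cons (a : ℕ) (w : List ℕ) (x : ℝ) :
    P (a :: w) x = (-x) ^ w.length * ((a : ℝ) - x - 1) + P w x := by
  unfold P
  rw [List.length_cons, Finset.sum_range_succ']
  simp only [List.getD_cons_succ, List.getD_cons_zero, Nat.add_sub_cancel, Nat.sub_zero,
    pow_succ]
  have h2 : (∑ i ∈ Finset.range w.length, (w.getD i 0 : ℝ) * (-x) ^ (w.length - (i + 1)))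
      = ∑ i ∈ Finset.range w.length, (w.getD i 0 : ℝ) * (-x) ^ (w.length - 1 - i) := by
    refine Finset.sum_congr rfl fun i _ => ?_
    have : w.length - (i + 1) = w.length - 1 - i := by omega
    rw [this]
  rw [h2]
  ring

lemma P_append (u v : List ℕ) (x : ℝ) :
    P (u ++ v) x = (-x) ^ v.length * P u x + P v x - (-x) ^ v.length := by
  induction u with
  | nil => simp [P_nil]
  | cons a u ih =>
    rw [List.cons_append, P_cons, ih, P_cons, List.length_append, pow_add]
    ring

lemma phiW_append (u v : List ℕ) : phiW (u ++ v) = phiW u ++ phiW v := by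
  simp [phiW]

lemma w_succ (n : ℕ) : phiW^[n+1] [1] = phiW (phiW^[n] [1]) :=
  Function.iterate_succ_apply' phiW n [1]

lemma w_rec : ∀ n : ℕ, phiW^[n+1+1] [1] = phiW^[n+1] [1] ++ phiW^[n] [1] ++ phiW^[n] [1] := by
  intro n
  induction n with
  | zero => rfl
  | succ n ih =>
    rw [w_succ (n+1+1), ih, phiW_append, phiW_append, ← w_succ (n+1), ← w_succ n, ih]

/-- length of the n-th word -/
def L (n : ℕ) : ℕ := (phiW^[n] [1]).length

lemma L_zero : L 0 = 1 := rfl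
lemma L_one : L 1 = 1 := rfl

lemma L_rec (n : ℕ) : L (n+1+1) = L (n+1) + L n + L n := by
  unfold L
  rw [w_rec]
  simp only [List.length_append]

lemma L_key : ∀ n : ℕ, 1 ≤ L n ∧ (n % 2 = 0 → L (n+1) + 1 = 2 * L n) ∧
    (n % 2 = 1 → L (n+1) = 2 * L n + 1) := by
  intro n
  induction n with
  | zero => exact ⟨le_refl 1, fun _ => rfl, fun h => by simp at h⟩
  | succ n ih =>
    obtain ⟨h1, he, ho⟩ := ih
    have h3 := L_rec n
    rcases Nat.even_or_odd n with hn | hn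
    · have hn' := Nat.even_iff.mp hn
      have h2 := he hn'
      exact ⟨by omega, fun h => by omega, fun _ => by omega⟩
    · have hn' := Nat.odd_iff.mp hn
      have h2 := ho hn'
      exact ⟨by omega, fun _ => by omega, fun h => by omega⟩

lemma L_pos (n : ℕ) : 1 ≤ L n := (L_key n).1

lemma L_odd (n : ℕ) : Odd (L n) := by
  rcases n with _ | n
  · exact ⟨0, rfl⟩
  · obtain ⟨h1, he, ho⟩ := L_key n
    rw [Nat.odd_iff]
    rcases Nat.even_or_odd n with hn | hn
    · have := he (Nat.even_iff.mp hn); omega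
    · have := ho (Nat.odd_iff.mp hn); omega

/-- Q n = 1 - P(w_n)(β) -/
noncomputable def Q (β : ℝ) (n : ℕ) : ℝ := 1 - P (phiW^[n] [1]) β

lemma Q_zero (β : ℝ) : Q β 0 = β := by
  simp [Q, P]

lemma Q_one (β : ℝ) : Q β 1 = β - 1 := by
  have h : phiW^[1] [1] = [2] := rfl
  rw [Q, h]
  simp [P]
  ring

lemma Q_rec (β : ℝ) (n : ℕ) :
    Q β (n+1+1) = β ^ (L n) * β ^ (L n) * Q β (n+1) - (β ^ (L n) - 1) * Q β n := by
  have hneg : (-β) ^ (L n) = -(β ^ (L n)) := (L_odd n).neg_pow β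
  have hL : (phiW^[n] [1]).length = L n := rfl
  unfold Q
  rw [w_rec n, P_append, P_append, hL, hneg]
  ring

lemma Q_ratio (β : ℝ) : ∀ n : ℕ,
    β ^ ((n+1) % 2) * Q β (n+1) = β ^ (n % 2) * (β ^ (L n) - 1) * Q β n := by
  intro n
  induction n with
  | zero =>
    rw [Q_zero, Q_one]
    norm_num [L_zero]
    ring
  | succ n ih =>
    have hrec := Q_rec β n
    rcases Nat.even_or_odd n with hn | hn
    · have hn' : n % 2 = 0 := Nat.even_iff.mp hn
      have e1 : (n+1) % 2 = 1 := by omega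
      have e2 : (n+1+1) % 2 = 0 := by omega
      rw [hn', e1, pow_zero, pow_one] at ih
      rw [e1, e2, pow_zero, pow_one, one_mul]
      have hL : 2 * L n = L (n+1) + 1 := by
        have := (L_key n).2.1 hn'; omega
      have hpow : β ^ (L n) * β ^ (L n) = β ^ (L (n+1)) * β := by
        rw [← pow_add, ← pow_succ]
        congr 1
        omega
      rw [hrec, hpow]
      linear_combination ih
    · have hn' : n % 2 = 1 := Nat.odd_iff.mp hn
      have e1 : (n+1) % 2 = 0 := by omega
      have e2 : (n+1+1) % 2 = 1 := by omega
      rw [hn', e1, pow_zero, pow_one, one_mul] at ih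
      rw [e1, e2, pow_zero, pow_one, one_mul]
      have hL : L (n+1) = 2 * L n + 1 := (L_key n).2.2 hn'
      have hpow : β ^ (L (n+1)) = β ^ (L n) * β ^ (L n) * β := by
        rw [← pow_add, ← pow_succ]
        congr 1
        omega
      rw [hrec, hpow]
      linear_combination ih

lemma Q_pos (β : ℝ) (hβ : 1 < β) : ∀ n : ℕ, 0 < Q β n := by
  intro n
  induction n with
  | zero => rw [Q_zero]; linarith
  | succ n ih =>
    have h := Q_ratio β n
    have hb0 : (0:ℝ) < β := by linarith
    have h1 : 1 < β ^ (L n) := one_lt_pow₀ hβ (by have := L_pos n; omega)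
    have hp : 0 < β ^ (n % 2) * (β ^ (L n) - 1) * Q β n := by
      apply mul_pos (mul_pos (pow_pos hb0 _) (by linarith)) ih
    rw [← h] at hp
    have hb : (0:ℝ) < β ^ ((n+1) % 2) := pow_pos hb0 _
    by_contra h'
    push_neg at h'
    nlinarith

theorem P_phi_one_lt_one (β : ℝ) (hβ : 1 < β) (n : ℕ) : P (phiW^[n] [1]) β < 1 := by
  have := Q_pos β hβ n
  unfold Q at this
  linarith
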